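/- For every Λ > 1, the integral of |γ''| over the interval [s, Λs] tends to zero as s → 0⁺: lim_{s→0⁺} ∫_s^{Λs} |γ''(σ)| dσ = 0 (where the integral is taken for s small enough that Λs ≤ s₀). -/

import Mathlib

open Filter Set MeasureTheory
open scoped RealInnerProductSpace

/-- The Hessian of `u` at `x`, as the derivative of the gradient. -/
noncomputable def hess {m : ℕ} (u : EuclideanSpace ℝ (Fin m) → ℝ)
    (x : EuclideanSpace ℝ (Fin m)) :
    EuclideanSpace ℝ (Fin m) →L[ℝ] EuclideanSpace ℝ (Fin m) :=
  fderiv ℝ (gradient u) x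

/-- The Laplacian of `u` at `x`, as the trace of the Hessian. -/
noncomputable def lap {m : ℕ} (u : EuclideanSpace ℝ (Fin m) → ℝ)
    (x : EuclideanSpace ℝ (Fin m)) : ℝ :=
  LinearMap.trace ℝ _ (hess u x : EuclideanSpace ℝ (Fin m) →ₗ[ℝ] EuclideanSpace ℝ (Fin m))

lemma symm_quad_vanish {E : Type*} [NormedAddCommGroup E] [InnerProductSpace ℝ E]
    (B : E →L[ℝ] E) (a : ℝ)
    (hsym : ∀ v w : E, ⟪B v, w⟫ = ⟪v, B w⟫)
    (hq : ∀ e : E, ⟪B (B e) + a • B e, B e⟫ = 0) :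
    ∀ e : E, B (B e) + a • B e = 0 := by
  set Q : E → E := fun e => B (B e) + a • B e with hQ
  have hQadd : ∀ e w : E, Q (e + w) = Q e + Q w := by
    intro e w
    simp only [hQ, map_add, smul_add]
    abel
  have h2 : ∀ e w : E, ⟪Q e, B w⟫ + ⟪Q w, B e⟫ = 0 := by
    intro e w
    have h := hq (e + w)
    rw [show B (B (e + w)) + a • B (e + w) = Q (e + w) from rfl, hQadd, map_add] at h
    rw [inner_add_left, inner_add_right, inner_add_right] at h
    have he := hq e
    have hw := hq w
    rw [show B (B e) + a • B e = Q e from rfl] at he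
    rw [show B (B w) + a • B w = Q w from rfl] at hw
    linarith
  have h3 : ∀ e : E, B (Q e) = 0 := by
    intro e
    have key : ∀ w : E, ⟪B (Q e), w⟫ = 0 := by
      intro w
      have e1 : ⟪Q e, B w⟫ = ⟪B (Q e), w⟫ := (hsym (Q e) w).symm
      have e2 : ⟪Q w, B e⟫ = ⟪B (Q e), w⟫ := by
        have hc : B (Q e) = B (B (B e)) + a • B (B e) := by
          simp only [hQ, map_add, ContinuousLinearMap.map_smul]
        have c1 : ⟪B (B w), B e⟫ = ⟪B (B (B e)), w⟫ := by
          calc ⟪B (B w), B e⟫ = ⟪B w, B (B e)⟫ := hsym _ _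
            _ = ⟪B (B e), B w⟫ := real_inner_comm _ _
            _ = ⟪B (B (B e)), w⟫ := (hsym _ _).symm
        have c2 : ⟪B w, B e⟫ = ⟪B (B e), w⟫ := by
          calc ⟪B w, B e⟫ = ⟪B e, B w⟫ := real_inner_comm _ _
            _ = ⟪B (B e), w⟫ := (hsym _ _).symm
        calc ⟪Q w, B e⟫ = ⟪B (B w), B e⟫ + a * ⟪B w, B e⟫ := by
              simp only [hQ, inner_add_left, real_inner_smul_left]
          _ = ⟪B (B (B e)), w⟫ + a * ⟪B (B e), w⟫ := by rw [c1, c2]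
          _ = ⟪B (Q e), w⟫ := by rw [hc, inner_add_left, real_inner_smul_left]
      have := h2 e w
      rw [e1, e2] at this
      linarith
    have := key (B (Q e))
    rwa [real_inner_self_eq_norm_sq, pow_eq_zero_iff (by norm_num), norm_eq_zero] at this
  intro e
  have : ⟪Q e, Q e⟫ = 0 := by
    calc ⟪Q e, Q e⟫ = ⟪B (B e), Q e⟫ + a * ⟪B e, Q e⟫ := by
          simp only [hQ, inner_add_left, real_inner_smul_left]
      _ = ⟪B e, B (Q e)⟫ + a * ⟪e, B (Q e)⟫ := by rw [hsym (B e) (Q e), hsym e (Q e)]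
      _ = 0 := by rw [h3, inner_zero_right, inner_zero_right]; ring
  rwa [real_inner_self_eq_norm_sq, pow_eq_zero_iff (by norm_num), norm_eq_zero] at this

lemma slope_bound {f q : ℝ → ℝ} {a ε b : ℝ} (hεpos : 0 ≤ ε)
    (hfc : ContinuousOn f (Icc 0 b)) (hf0 : f 0 = 0)
    (hd : ∀ σ ∈ Ioo 0 b, HasDerivAt f (q σ) σ)
    (hq : ∀ σ ∈ Ioo 0 b, |q σ - a| ≤ ε) :
    ∀ s ∈ Icc 0 b, |f s - a * s| ≤ ε * s := by
  intro s hs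
  rcases eq_or_lt_of_le hs.1 with h0 | h0
  · simp [← h0, hf0]
  have hsb : s ≤ b := hs.2
  have hIcc : Icc 0 s ⊆ Icc 0 b := Icc_subset_Icc le_rfl hsb
  have hIoo : Ioo 0 s ⊆ Ioo 0 b := Ioo_subset_Ioo le_rfl hsb
  have hup : f s ≤ (a + ε) * s := by
    set h : ℝ → ℝ := fun t => (a + ε) * t - f t with hh
    have hmono : MonotoneOn h (Icc 0 s) := by
      apply monotoneOn_of_deriv_nonneg (convex_Icc 0 s)
      · exact (continuousOn_const.mul continuousOn_id).sub (hfc.mono hIcc)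
      · intro t ht
        rw [interior_Icc] at ht
        exact (((hasDerivAt_id t).const_mul (a + ε)).sub (hd t (hIoo ht))).differentiableAt.differentiableWithinAt
      · intro t ht
        rw [interior_Icc] at ht
        have hder : HasDerivAt h ((a + ε) - q t) t := by
          exact (((hasDerivAt_id t).const_mul (a + ε)).sub (hd t (hIoo ht))).congr_deriv (by ring)
        rw [hder.deriv]
        have := hq t (hIoo ht)
        rw [abs_le] at this
        linarith [this.2]
    have := hmono (left_mem_Icc.2 hs.1) (right_mem_Icc.2 hs.1) hs.1
    simp only [hh, hf0, mul_zero, sub_zero] at this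
    linarith
  have hlo : (a - ε) * s ≤ f s := by
    set h : ℝ → ℝ := fun t => f t - (a - ε) * t with hh
    have hmono : MonotoneOn h (Icc 0 s) := by
      apply monotoneOn_of_deriv_nonneg (convex_Icc 0 s)
      · exact (hfc.mono hIcc).sub (continuousOn_const.mul continuousOn_id)
      · intro t ht
        rw [interior_Icc] at ht
        exact ((hd t (hIoo ht)).sub ((hasDerivAt_id t).const_mul (a - ε))).differentiableAt.differentiableWithinAt
      · intro t ht
        rw [interior_Icc] at ht
        have hder : HasDerivAt h (q t - (a - ε)) t := by
          exact ((hd t (hIoo ht)).sub ((hasDerivAt_id t).const_mul (a - ε))).congr_deriv (by ring)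
        rw [hder.deriv]
        have := hq t (hIoo ht)
        rw [abs_le] at this
        linarith [this.1]
    have := hmono (left_mem_Icc.2 hs.1) (right_mem_Icc.2 hs.1) hs.1
    simp only [hh, hf0, mul_zero, sub_zero, zero_sub] at this
    linarith
  rw [abs_le]
  constructor <;> nlinarith

set_option maxHeartbeats 2000000 in
/-- for every `Λ > 1`, `∫_s^{Λs} |γ''| → 0` as `s → 0⁺`. -/
theorem integral_of_second_derivative_on_dyadic_scales_tendsto_zero
    {n : ℕ} (hn : 1 ≤ n)
    {Ω U : Set (EuclideanSpace ℝ (Fin (n + 1)))}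
    (hΩcomp : IsCompact Ω) (hΩconn : IsConnected Ω)
    (hΩreg : Ω = closure (interior Ω)) (hΩint : (interior Ω).Nonempty)
    (hUopen : IsOpen U) (hΩU : Ω ⊆ U)
    (u : EuclideanSpace ℝ (Fin (n + 1)) → ℝ) (hu : ContDiffOn ℝ 2 u U)
    (hbdry : ∃ c : ℝ, (∀ x ∈ frontier Ω, u x = c) ∧ Ω = {x ∈ U | c ≤ u x})
    (hbdrygrad : ∀ x ∈ frontier Ω, gradient u x ≠ 0)
    (hsup : sSup (u '' Ω) = 0)
    (harrival : ∀ x ∈ Ω, gradient u x ≠ 0 →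
      ⟪hess u x (gradient u x), gradient u x⟫ = (1 + lap u x) * ‖gradient u x‖ ^ 2)
    -- the arclength-parametrized flow line γ
    (s₀ : ℝ) (hs₀ : 0 < s₀) (γ : ℝ → EuclideanSpace ℝ (Fin (n + 1)))
    (hγcont : ContinuousOn γ (Icc 0 s₀))
    (hγΩ : ∀ s ∈ Icc (0 : ℝ) s₀, γ s ∈ Ω)
    (hγ0 : γ 0 ∈ {y ∈ Ω | gradient u y = 0})
    (hγC1 : ContDiffOn ℝ 1 γ (Ioc 0 s₀))
    (hγgrad : ∀ s ∈ Ioc (0 : ℝ) s₀, gradient u (γ s) ≠ 0)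
    (hγderiv : ∀ s ∈ Ioc (0 : ℝ) s₀,
      HasDerivAt γ (-(‖gradient u (γ s)‖⁻¹ • gradient u (γ s))) s)
    (Λ : ℝ) (hΛ : 1 < Λ) :
    Tendsto (fun s => ∫ σ in s..(Λ * s), ‖deriv (deriv γ) σ‖)
      (nhdsWithin 0 (Ioi 0)) (nhds 0) := by
  classical
  obtain ⟨hx0Ω, hgrad0⟩ := hγ0
  set x₀ : EuclideanSpace ℝ (Fin (n + 1)) := γ 0 with hx₀def
  have hx0U : x₀ ∈ U := hΩU hx0Ω
  -- gradient is C¹ on U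
  have hgradC1 : ContDiffOn ℝ 1 (gradient u) U := by
    have h1 : ContDiffOn ℝ 1 (fderiv ℝ u) U := hu.fderiv_of_isOpen hUopen (by norm_num)
    have h2 : gradient u = (InnerProductSpace.toDual ℝ (EuclideanSpace ℝ (Fin (n + 1)))).symm ∘ (fderiv ℝ u) := rfl
    rw [h2]
    exact ((InnerProductSpace.toDual ℝ (EuclideanSpace ℝ (Fin (n + 1)))).symm.contDiff).comp_contDiffOn h1
  have hgradcont : ContinuousOn (gradient u) U := hgradC1.continuousOn
  have hgradDiff : ∀ x ∈ U, HasFDerivAt (gradient u) (hess u x) x := by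
    intro x hx
    have := ((hgradC1.differentiableOn one_ne_zero).differentiableAt
      (hUopen.mem_nhds hx)).hasFDerivAt
    simpa [hess] using this
  have hhesscont : ContinuousOn (hess u) U := by
    have := hgradC1.continuousOn_fderiv_of_isOpen hUopen le_rfl
    exact this
  have hlapcont : ContinuousOn (lap u) U := by
    have hT : Continuous fun T : EuclideanSpace ℝ (Fin (n + 1)) →L[ℝ] EuclideanSpace ℝ (Fin (n + 1)) =>
        LinearMap.trace ℝ _ (T : EuclideanSpace ℝ (Fin (n + 1)) →ₗ[ℝ] EuclideanSpace ℝ (Fin (n + 1))) := by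
      exact LinearMap.continuous_of_finiteDimensional
        ((LinearMap.trace ℝ (EuclideanSpace ℝ (Fin (n + 1)))).comp
          (ContinuousLinearMap.coeLM ℝ))
    exact hT.comp_continuousOn hhesscont
  -- γ tends to x₀ from the right
  have hγtends : Tendsto γ (nhdsWithin 0 (Ioi 0)) (nhds x₀) := by
    have h1 : ContinuousWithinAt γ (Icc 0 s₀) 0 := hγcont 0 ⟨le_rfl, hs₀.le⟩
    have h2 : Tendsto γ (nhdsWithin 0 (Ioc 0 s₀)) (nhds x₀) :=
      h1.tendsto.mono_left (nhdsWithin_mono 0 Ioc_subset_Icc_self)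
    rwa [nhdsWithin_Ioc_eq_nhdsGT hs₀] at h2
  set B := hess u x₀ with hBdef
  set a : ℝ := -(1 + lap u x₀) with hadef
  -- x₀ is interior
  have hx0int : x₀ ∈ interior Ω := by
    by_contra h
    have : x₀ ∈ frontier Ω := by
      rw [hΩcomp.isClosed.frontier_eq]
      exact ⟨hx0Ω, h⟩
    exact hbdrygrad x₀ this hgrad0
  -- symmetry of B
  have hBsym : ∀ v w : EuclideanSpace ℝ (Fin (n + 1)), ⟪B v, w⟫ = ⟪v, B w⟫ := by
    have hder1 : ∀ᶠ y in nhds x₀, HasFDerivAt u (fderiv ℝ u y) y := by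
      filter_upwards [hUopen.mem_nhds hx0U] with y hy
      exact ((hu.differentiableOn (by norm_num)).differentiableAt
        (hUopen.mem_nhds hy)).hasFDerivAt
    have hfC1 : ContDiffOn ℝ 1 (fderiv ℝ u) U := hu.fderiv_of_isOpen hUopen (by norm_num)
    have hder2 : HasFDerivAt (fderiv ℝ u) (fderiv ℝ (fderiv ℝ u) x₀) x₀ :=
      ((hfC1.differentiableOn one_ne_zero).differentiableAt (hUopen.mem_nhds hx0U)).hasFDerivAt
    have hsym2 := second_derivative_symmetric_of_eventually hder1 hder2
    have hWB : ∀ v w : EuclideanSpace ℝ (Fin (n + 1)),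
        fderiv ℝ (fderiv ℝ u) x₀ v w = ⟪B v, w⟫ := by
      intro v w
      have h1 : HasFDerivAt (fun y => fderiv ℝ u y w)
          ((ContinuousLinearMap.apply ℝ ℝ w).comp (fderiv ℝ (fderiv ℝ u) x₀)) x₀ :=
        (ContinuousLinearMap.apply ℝ ℝ w).hasFDerivAt.comp x₀ hder2
      have h2 : HasFDerivAt (fun y => fderiv ℝ u y w) ((innerSL ℝ w).comp B) x₀ := by
        have h3 := ((innerSL ℝ w).hasFDerivAt).comp x₀ (hgradDiff x₀ hx0U)
        have hfun : (fun y => fderiv ℝ u y w)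
            = (innerSL ℝ w) ∘ (gradient u) := by
          funext y
          simp only [Function.comp_apply, innerSL_apply_apply, gradient]
          rw [real_inner_comm]
          exact (InnerProductSpace.toDual_symm_apply).symm
        rw [hfun]
        exact h3
      have huniq := h1.unique h2
      have happ : fderiv ℝ (fderiv ℝ u) x₀ v w = ⟪w, B v⟫ := by
        simpa using ContinuousLinearMap.ext_iff.1 huniq v
      rw [happ, real_inner_comm]
    intro v w
    rw [← hWB v w, hsym2 v w, hWB w v, real_inner_comm]
  have hkey : ∀ e : EuclideanSpace ℝ (Fin (n + 1)), ⟪B (B e) + a • B e, B e⟫ = 0 := by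
    intro e
    by_cases hBe : B e = 0
    · simp [hBe]
    have hline : Tendsto (fun t : ℝ => x₀ + t • e) (nhdsWithin 0 (Ioi 0)) (nhds x₀) := by
      have hc : Continuous fun t : ℝ => x₀ + t • e :=
        continuous_const.add (continuous_id.smul continuous_const)
      have h0 : Tendsto (fun t : ℝ => x₀ + t • e) (nhds 0) (nhds x₀) := by
        simpa using hc.tendsto 0
      exact h0.mono_left nhdsWithin_le_nhds
    have hψ : Tendsto (fun t : ℝ => t⁻¹ • gradient u (x₀ + t • e))
        (nhdsWithin 0 (Ioi 0)) (nhds (B e)) := by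
      have hl : HasDerivAt (fun t : ℝ => x₀ + t • e) e 0 := by
        simpa using ((hasDerivAt_id (0:ℝ)).smul_const e).const_add x₀
      have hG : HasFDerivAt (gradient u) B ((fun t : ℝ => x₀ + t • e) 0) := by
        simpa using hgradDiff x₀ hx0U
      have hc : HasDerivAt (fun t : ℝ => gradient u (x₀ + t • e)) (B e) 0 := by
        exact hG.comp_hasDerivAt 0 hl
      have h1 := hasDerivAt_iff_tendsto_slope.1 hc
      have h2 : Tendsto (slope (fun t : ℝ => gradient u (x₀ + t • e)) 0)
          (nhdsWithin 0 (Ioi 0)) (nhds (B e)) :=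
        h1.mono_left (nhdsWithin_mono 0 (fun t ht => ne_of_gt ht))
      refine h2.congr' ?_
      filter_upwards [self_mem_nhdsWithin] with t ht
      rw [slope_def_module]
      simp [hgrad0]
    have hmem : ∀ᶠ t : ℝ in nhdsWithin 0 (Ioi 0), x₀ + t • e ∈ interior Ω :=
      hline.eventually_mem (isOpen_interior.mem_nhds hx0int)
    have hnz : ∀ᶠ t : ℝ in nhdsWithin 0 (Ioi 0), gradient u (x₀ + t • e) ≠ 0 := by
      filter_upwards [hψ.eventually_ne hBe] with t ht
      intro h
      exact ht (by simp [h])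
    have hH : Tendsto (fun t : ℝ => hess u (x₀ + t • e)) (nhdsWithin 0 (Ioi 0)) (nhds B) :=
      (hhesscont.continuousAt (hUopen.mem_nhds hx0U)).tendsto.comp hline
    have happ : Tendsto (fun t : ℝ => hess u (x₀ + t • e) (t⁻¹ • gradient u (x₀ + t • e)))
        (nhdsWithin 0 (Ioi 0)) (nhds (B (B e))) :=
      (isBoundedBilinearMap_apply.continuous.tendsto (B, B e)).comp (hH.prodMk_nhds hψ)
    have hinner : Tendsto
        (fun t : ℝ => ⟪hess u (x₀ + t • e) (t⁻¹ • gradient u (x₀ + t • e)),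
          t⁻¹ • gradient u (x₀ + t • e)⟫)
        (nhdsWithin 0 (Ioi 0)) (nhds ⟪B (B e), B e⟫) := happ.inner hψ
    have hlapt : Tendsto (fun t : ℝ => (1 + lap u (x₀ + t • e)) * ‖t⁻¹ • gradient u (x₀ + t • e)‖ ^ 2)
        (nhdsWithin 0 (Ioi 0)) (nhds ((1 + lap u x₀) * ‖B e‖ ^ 2)) := by
      refine Tendsto.mul ?_ ((hψ.norm).pow 2)
      exact tendsto_const_nhds.add
        (((hlapcont.continuousAt (hUopen.mem_nhds hx0U)).tendsto).comp hline)
    have heq : (fun t : ℝ => ⟪hess u (x₀ + t • e) (t⁻¹ • gradient u (x₀ + t • e)),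
          t⁻¹ • gradient u (x₀ + t • e)⟫)
        =ᶠ[nhdsWithin 0 (Ioi 0)]
        (fun t : ℝ => (1 + lap u (x₀ + t • e)) * ‖t⁻¹ • gradient u (x₀ + t • e)‖ ^ 2) := by
      filter_upwards [hmem, hnz, self_mem_nhdsWithin] with t htΩ htnz htpos
      have htpos' : (0:ℝ) < t := htpos
      have harr := harrival (x₀ + t • e) (interior_subset htΩ) htnz
      rw [ContinuousLinearMap.map_smul, inner_smul_left, inner_smul_right, harr,
        norm_smul, mul_pow]
      simp only [RCLike.conj_to_real, norm_inv, Real.norm_eq_abs, abs_of_pos htpos']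
      ring
    have hlim : ⟪B (B e), B e⟫ = (1 + lap u x₀) * ‖B e‖ ^ 2 :=
      tendsto_nhds_unique (hinner.congr' heq) hlapt
    rw [inner_add_left, real_inner_smul_left, hlim, real_inner_self_eq_norm_sq, hadef]
    ring
  have hQ0 : ∀ e : EuclideanSpace ℝ (Fin (n + 1)), B (B e) + a • B e = 0 :=
    symm_quad_vanish B a hBsym hkey
  set g : ℝ → EuclideanSpace ℝ (Fin (n + 1)) := fun t => gradient u (γ t) with hgdef
  set f : ℝ → ℝ := fun t => ‖g t‖ with hfdef
  have hγU : ∀ σ ∈ Icc (0:ℝ) s₀, γ σ ∈ U := fun σ hσ => hΩU (hγΩ σ hσ)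
  have hf0 : f 0 = 0 := by
    show ‖gradient u (γ 0)‖ = 0
    rw [show gradient u (γ 0) = 0 from hgrad0, norm_zero]
  have hfpos : ∀ σ ∈ Ioc (0:ℝ) s₀, 0 < f σ := fun σ hσ =>
    norm_pos_iff.2 (hγgrad σ hσ)
  have hfc : ContinuousOn f (Icc 0 s₀) :=
    (hgradcont.comp hγcont hγU).norm
  have hgderiv : ∀ σ ∈ Ioc (0:ℝ) s₀,
      HasDerivAt g (-((f σ)⁻¹ • hess u (γ σ) (g σ))) σ := by
    intro σ hσ
    have h1 := (hgradDiff (γ σ) (hγU σ (Ioc_subset_Icc_self hσ))).comp_hasDerivAt σ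
      (hγderiv σ hσ)
    exact h1.congr_deriv (by rw [map_neg, ContinuousLinearMap.map_smul])
  have hfderiv : ∀ σ ∈ Ioc (0:ℝ) s₀, HasDerivAt f (-(1 + lap u (γ σ))) σ := by
    intro σ hσ
    have hgσ := hgderiv σ hσ
    have hfσ : f σ ≠ 0 := (hfpos σ hσ).ne'
    have hsq : HasDerivAt (fun t => ‖g t‖ ^ 2)
        (2 * ⟪g σ, -((f σ)⁻¹ • hess u (γ σ) (g σ))⟫) σ := hgσ.norm_sq
    have hsqrt := hsq.sqrt (pow_ne_zero 2 (norm_ne_zero_iff.2 (hγgrad σ hσ)))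
    have hfun : (fun t => Real.sqrt (‖g t‖ ^ 2)) = f := by
      funext t
      exact Real.sqrt_sq (norm_nonneg _)
    rw [hfun] at hsqrt
    convert hsqrt using 1
    rw [Real.sqrt_sq (norm_nonneg _)]
    have harr := harrival (γ σ) (hγΩ σ (Ioc_subset_Icc_self hσ)) (hγgrad σ hσ)
    rw [inner_neg_right, real_inner_smul_right, real_inner_comm, harr]
    have : (‖gradient u (γ σ)‖ : ℝ) = f σ := rfl
    rw [this]
    field_simp
  set G : ℝ → EuclideanSpace ℝ (Fin (n + 1)) :=
    fun t => -(‖gradient u (γ t)‖⁻¹ • gradient u (γ t)) with hGdef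
  have hGderiv : ∀ σ ∈ Ioc (0:ℝ) s₀, HasDerivAt G
      (((f σ)⁻¹) ^ 2 • (hess u (γ σ) (g σ) + (-(1 + lap u (γ σ))) • g σ)) σ := by
    intro σ hσ
    have hfσ : f σ ≠ 0 := (hfpos σ hσ).ne'
    have hinv := (hfderiv σ hσ).inv hfσ
    have hsmul := (hinv.smul (hgderiv σ hσ)).neg
    have hGfun : G = fun t => -((f t)⁻¹ • g t) := rfl
    rw [hGfun]
    refine hsmul.congr_deriv ?_
    rw [smul_add, Pi.inv_apply]
    match_scalars <;> field_simp <;> ring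
  have hderiv2 : ∀ σ ∈ Ioo (0:ℝ) s₀, deriv (deriv γ) σ =
      ((f σ)⁻¹) ^ 2 • (hess u (γ σ) (g σ) + (-(1 + lap u (γ σ))) • g σ) := by
    intro σ hσ
    have hev : deriv γ =ᶠ[nhds σ] G := by
      filter_upwards [Ioo_mem_nhds hσ.1 hσ.2] with t ht
      exact (hγderiv t (Ioo_subset_Ioc_self ht)).deriv
    rw [hev.deriv_eq]
    exact (hGderiv σ (Ioo_subset_Ioc_self hσ)).deriv
  have hγdist : ∀ σ ∈ Ioc (0:ℝ) s₀, ‖γ σ - x₀‖ ≤ σ := by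
    intro σ hσ
    have hstep : ∀ τ ∈ Ioc (0:ℝ) σ, ‖γ σ - γ τ‖ ≤ σ - τ := by
      intro τ hτ
      have hsub : Icc τ σ ⊆ Ioc 0 s₀ := fun t ht =>
        ⟨lt_of_lt_of_le hτ.1 ht.1, le_trans ht.2 hσ.2⟩
      have hlip := Convex.norm_image_sub_le_of_norm_hasDerivWithin_le
        (f := γ) (f' := G) (C := 1)
        (fun t ht => (hγderiv t (hsub ht)).hasDerivWithinAt)
        (fun t ht => by
          have hne := hγgrad t (hsub ht)
          have : ‖G t‖ = 1 := by
            rw [hGdef]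
            rw [norm_neg, norm_smul, norm_inv, norm_norm,
              inv_mul_cancel₀ (norm_ne_zero_iff.2 hne)]
          rw [this])
        (convex_Icc τ σ) (left_mem_Icc.2 hτ.2) (right_mem_Icc.2 hτ.2)
      calc ‖γ σ - γ τ‖ ≤ 1 * ‖σ - τ‖ := hlip
        _ = σ - τ := by
            rw [one_mul, Real.norm_eq_abs, abs_of_nonneg (by linarith [hτ.2])]
    have h1 : Tendsto (fun τ => ‖γ σ - γ τ‖) (nhdsWithin 0 (Ioi 0))
        (nhds ‖γ σ - x₀‖) := (tendsto_const_nhds.sub hγtends).norm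
    have h2 : Tendsto (fun τ : ℝ => σ - τ) (nhdsWithin 0 (Ioi 0)) (nhds σ) := by
      have hid : Tendsto (fun τ : ℝ => τ) (nhdsWithin (0:ℝ) (Ioi 0)) (nhds 0) :=
        tendsto_id.mono_left nhdsWithin_le_nhds
      simpa using hid.const_sub σ
    refine le_of_tendsto_of_tendsto h1 h2 ?_
    filter_upwards [Ioo_mem_nhdsGT_of_mem (Set.left_mem_Ico.2 hσ.1)] with τ hτ
    exact hstep τ ⟨hτ.1, hτ.2.le⟩
  -- slope estimate for f
  have hslope : ∀ ε > (0:ℝ), ∃ b, 0 < b ∧ b ≤ s₀ ∧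
      ∀ s ∈ Icc 0 b, |f s - a * s| ≤ ε * s := by
    intro ε hε
    have htends : Tendsto (fun σ => -(1 + lap u (γ σ))) (nhdsWithin 0 (Ioi 0))
        (nhds a) := by
      rw [hadef]
      exact (tendsto_const_nhds.add
        (((hlapcont.continuousAt (hUopen.mem_nhds hx0U)).tendsto).comp hγtends)).neg
    have hev : ∀ᶠ σ in nhdsWithin 0 (Ioi 0), |(-(1 + lap u (γ σ))) - a| ≤ ε :=
      (Metric.tendsto_nhds.1 htends ε hε).mono fun σ h =>
        le_of_lt (by rwa [Real.dist_eq] at h)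
    obtain ⟨b', hb'mem, hb'sub⟩ := mem_nhdsGT_iff_exists_Ioc_subset.1 hev
    refine ⟨min b' s₀, lt_min hb'mem hs₀, min_le_right _ _, ?_⟩
    refine slope_bound hε.le (hfc.mono (Icc_subset_Icc le_rfl (min_le_right _ _))) hf0
      (fun σ hσ => hfderiv σ ⟨hσ.1, hσ.2.le.trans (min_le_right _ _)⟩)
      (fun σ hσ => hb'sub ⟨hσ.1, hσ.2.le.trans (min_le_left _ _)⟩)
  have ha0 : 0 ≤ a := by
    by_contra h
    push_neg at h
    obtain ⟨b, hbpos, hbs, hb⟩ := hslope (-a/2) (by linarith)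
    have hfb := hfpos b ⟨hbpos, hbs⟩
    have h2 := hb b ⟨hbpos.le, le_rfl⟩
    rw [abs_le] at h2
    nlinarith [h2.2]
  have hane : a ≠ 0 := by
    intro h0
    have hBzero : ∀ e : EuclideanSpace ℝ (Fin (n + 1)), B e = 0 := by
      intro e
      have hq := hQ0 e
      rw [h0, zero_smul, add_zero] at hq
      have h2 : ⟪B e, B e⟫ = 0 := by
        rw [hBsym e (B e), hq, inner_zero_right]
      exact inner_self_eq_zero.1 h2
    have hlap0 : lap u x₀ = 0 := by
      have h1 : lap u x₀ = LinearMap.trace ℝ _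
          ((B : EuclideanSpace ℝ (Fin (n + 1)) →L[ℝ] EuclideanSpace ℝ (Fin (n + 1))) :
            EuclideanSpace ℝ (Fin (n + 1)) →ₗ[ℝ] EuclideanSpace ℝ (Fin (n + 1))) := rfl
      have h2 : (B : EuclideanSpace ℝ (Fin (n + 1)) →L[ℝ]
          EuclideanSpace ℝ (Fin (n + 1))) = 0 := by
        ext1 e
        exact hBzero e
      rw [h1, h2]
      simp
    rw [hadef, hlap0] at h0
    norm_num at h0
  have hapos : 0 < a := lt_of_le_of_ne ha0 (Ne.symm hane)
  obtain ⟨b₁, hb₁pos, hb₁s, hb₁⟩ := hslope (a/2) (by positivity)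
  have hflow : ∀ σ ∈ Ioc (0:ℝ) b₁, a/2 * σ ≤ f σ := by
    intro σ hσ
    have h2 := hb₁ σ ⟨hσ.1.le, hσ.2⟩
    rw [abs_le] at h2
    nlinarith [h2.1]
  have hatends : Tendsto (fun σ => -(1 + lap u (γ σ))) (nhdsWithin 0 (Ioi 0))
      (nhds a) := by
    rw [hadef]
    exact (tendsto_const_nhds.add
      (((hlapcont.continuousAt (hUopen.mem_nhds hx0U)).tendsto).comp hγtends)).neg
  have hkey2 : ∀ ε > (0:ℝ), ∀ᶠ σ in nhdsWithin (0:ℝ) (Ioi 0),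
      σ * ‖deriv (deriv γ) σ‖ ≤ ε := by
    intro ε hε
    have hMpos : 0 < ‖B‖ + a := add_pos_of_nonneg_of_pos (norm_nonneg _) hapos
    have hε₂pos : 0 < ε * a ^ 2 / (8 * (‖B‖ + a)) :=
      div_pos (mul_pos hε (pow_pos hapos 2)) (mul_pos (by norm_num) hMpos)
    have hHtends : Tendsto (fun σ => hess u (γ σ)) (nhdsWithin 0 (Ioi 0)) (nhds B) :=
      ((hhesscont.continuousAt (hUopen.mem_nhds hx0U)).tendsto).comp hγtends
    have hEH : ∀ᶠ σ in nhdsWithin (0:ℝ) (Ioi 0),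
        ‖hess u (γ σ) - B‖ ≤ ε * a / 8 := by
      have h2 : Tendsto (fun σ => ‖hess u (γ σ) - B‖) (nhdsWithin 0 (Ioi 0))
          (nhds 0) := tendsto_iff_norm_sub_tendsto_zero.1 hHtends
      exact (Metric.tendsto_nhds.1 h2 (ε * a / 8) (div_pos (mul_pos hε hapos) (by norm_num))).mono
        fun σ h => by
        rw [Real.dist_eq, sub_zero] at h
        exact le_of_lt (lt_of_le_of_lt (le_abs_self _) h)
    have hEa : ∀ᶠ σ in nhdsWithin (0:ℝ) (Ioi 0),
        |(-(1 + lap u (γ σ))) - a| ≤ ε * a / 8 :=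
      (Metric.tendsto_nhds.1 hatends (ε * a / 8) (div_pos (mul_pos hε hapos) (by norm_num))).mono
        fun σ h => le_of_lt (by rwa [Real.dist_eq] at h)
    have hEr : ∀ᶠ σ in nhdsWithin (0:ℝ) (Ioi 0),
        ‖g σ - B (γ σ - x₀)‖ ≤ (ε * a ^ 2 / (8 * (‖B‖ + a))) * ‖γ σ - x₀‖ := by
      have hlittle := (hgradDiff x₀ hx0U).isLittleO
      have hev := hlittle.def hε₂pos
      have h3 := hγtends.eventually hev
      have h4 : ∀ᶠ σ in nhdsWithin (0:ℝ) (Ioi 0),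
          ‖gradient u (γ σ) - gradient u x₀ - B (γ σ - x₀)‖
            ≤ ε * a ^ 2 / (8 * (‖B‖ + a)) * ‖γ σ - x₀‖ := h3
      filter_upwards [h4] with σ h5
      rw [show gradient u x₀ = 0 from hgrad0, sub_zero] at h5
      exact h5
    filter_upwards [hEH, hEa, hEr, Ioo_mem_nhdsGT_of_mem (Set.left_mem_Ico.2 hb₁pos)]
      with σ h1 h2 h3 h4
    have hσpos : 0 < σ := h4.1
    have hσIoo : σ ∈ Ioo 0 s₀ := ⟨hσpos, lt_of_lt_of_le h4.2 hb₁s⟩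
    have hσIoc : σ ∈ Ioc 0 s₀ := ⟨hσpos, hσIoo.2.le⟩
    rw [hderiv2 σ hσIoo]
    have hF : 0 < f σ := hfpos σ hσIoc
    have hflowσ : a/2 * σ ≤ f σ := hflow σ ⟨hσpos, h4.2.le⟩
    have hdist : ‖γ σ - x₀‖ ≤ σ := hγdist σ hσIoc
    have hBg : B (g σ) + a • g σ
        = B (g σ - B (γ σ - x₀)) + a • (g σ - B (γ σ - x₀)) := by
      have hq := hQ0 (γ σ - x₀)
      calc B (g σ) + a • g σ
          = (B (B (γ σ - x₀)) + a • B (γ σ - x₀))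
            + (B (g σ - B (γ σ - x₀)) + a • (g σ - B (γ σ - x₀))) := by
            conv_lhs => rw [show g σ = B (γ σ - x₀) + (g σ - B (γ σ - x₀)) by abel]
            rw [map_add, smul_add]
            abel
        _ = B (g σ - B (γ σ - x₀)) + a • (g σ - B (γ σ - x₀)) := by
            rw [hq, zero_add]
    have hsplit : hess u (γ σ) (g σ) + (-(1 + lap u (γ σ))) • g σ
        = (hess u (γ σ) - B) (g σ)
          + (B (g σ - B (γ σ - x₀)) + a • (g σ - B (γ σ - x₀)))
          + ((-(1 + lap u (γ σ))) - a) • g σ := by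
      rw [← hBg, ContinuousLinearMap.sub_apply, sub_smul]
      abel
    have hfσnorm : ‖g σ‖ = f σ := rfl
    have t1 : ‖(hess u (γ σ) - B) (g σ)‖ ≤ (ε * a / 8) * f σ := by
      refine le_trans ((hess u (γ σ) - B).le_opNorm (g σ)) ?_
      rw [hfσnorm]
      exact mul_le_mul_of_nonneg_right h1 hF.le
    have t2 : ‖B (g σ - B (γ σ - x₀)) + a • (g σ - B (γ σ - x₀))‖
        ≤ ε * a ^ 2 * σ / 8 := by
      have u1 := B.le_opNorm (g σ - B (γ σ - x₀))
      have u2 : ‖a • (g σ - B (γ σ - x₀))‖ = a * ‖g σ - B (γ σ - x₀)‖ := by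
        rw [norm_smul, Real.norm_eq_abs, abs_of_pos hapos]
      have u3 : ‖g σ - B (γ σ - x₀)‖ ≤ (ε * a ^ 2 / (8 * (‖B‖ + a))) * σ :=
        h3.trans (mul_le_mul_of_nonneg_left hdist hε₂pos.le)
      have u4 : (‖B‖ + a) * ((ε * a ^ 2 / (8 * (‖B‖ + a))) * σ) = ε * a ^ 2 * σ / 8 := by
        field_simp
      calc ‖B (g σ - B (γ σ - x₀)) + a • (g σ - B (γ σ - x₀))‖
          ≤ ‖B (g σ - B (γ σ - x₀))‖ + ‖a • (g σ - B (γ σ - x₀))‖ := norm_add_le _ _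
        _ ≤ (‖B‖ + a) * ‖g σ - B (γ σ - x₀)‖ := by
            rw [u2]
            nlinarith [norm_nonneg (g σ - B (γ σ - x₀)), u1]
        _ ≤ (‖B‖ + a) * ((ε * a ^ 2 / (8 * (‖B‖ + a))) * σ) :=
            mul_le_mul_of_nonneg_left u3 hMpos.le
        _ = ε * a ^ 2 * σ / 8 := u4
    have t3 : ‖((-(1 + lap u (γ σ))) - a) • g σ‖ ≤ (ε * a / 8) * f σ := by
      rw [norm_smul, Real.norm_eq_abs, hfσnorm]
      exact mul_le_mul_of_nonneg_right h2 hF.le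
    have hN : ‖hess u (γ σ) (g σ) + (-(1 + lap u (γ σ))) • g σ‖
        ≤ (ε * a / 8) * f σ + ε * a ^ 2 * σ / 8 + (ε * a / 8) * f σ := by
      rw [hsplit]
      exact le_trans (norm_add₃_le) (by gcongr)
    rw [norm_smul, Real.norm_eq_abs, abs_of_nonneg (by positivity :
      (0:ℝ) ≤ ((f σ)⁻¹) ^ 2)]
    have hkeyineq : σ * ‖hess u (γ σ) (g σ) + (-(1 + lap u (γ σ))) • g σ‖
        ≤ ε * (f σ) ^ 2 := by
      have k1 := mul_le_mul_of_nonneg_left hN hσpos.le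
      have k2 : 0 ≤ ε * (f σ - a/2*σ) * f σ :=
        mul_nonneg (mul_nonneg hε.le (sub_nonneg.2 hflowσ)) hF.le
      have k3 : 0 ≤ ε * (f σ - a/2*σ) * (f σ + a/2*σ) :=
        mul_nonneg (mul_nonneg hε.le (sub_nonneg.2 hflowσ))
          (add_nonneg hF.le (by positivity))
      nlinarith [k1, k2, k3]
    calc σ * (((f σ)⁻¹) ^ 2 * ‖hess u (γ σ) (g σ) + (-(1 + lap u (γ σ))) • g σ‖)
        = (σ * ‖hess u (γ σ) (g σ) + (-(1 + lap u (γ σ))) • g σ‖) * ((f σ) ^ 2)⁻¹ := by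
          rw [inv_pow]
          ring
      _ ≤ (ε * (f σ) ^ 2) * ((f σ) ^ 2)⁻¹ :=
          mul_le_mul_of_nonneg_right hkeyineq (by positivity)
      _ = ε := by field_simp
  -- final assembly
  rw [Metric.tendsto_nhds]
  intro ε hε
  have hΛ1 : 0 < Λ - 1 := by linarith
  have hΛpos : 0 < Λ := by linarith
  have hε' : 0 < ε / (2 * (Λ - 1)) := by positivity
  obtain ⟨b, hbmem, hbsub⟩ := mem_nhdsGT_iff_exists_Ioc_subset.1 (hkey2 _ hε')
  have hbpos : 0 < b := hbmem
  filter_upwards [Ioo_mem_nhdsGT_of_mem (Set.left_mem_Ico.2 (div_pos hbpos hΛpos))]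
    with s hs
  have hspos : 0 < s := hs.1
  have hΛs : Λ * s ≤ b := by
    have h5 := hs.2
    rw [lt_div_iff₀ hΛpos] at h5
    nlinarith
  have hsΛs : s < Λ * s := by nlinarith
  have hbound : ∀ x ∈ Set.uIoc s (Λ * s),
      ‖‖deriv (deriv γ) x‖‖ ≤ (ε / (2 * (Λ - 1))) / s := by
    intro x hx
    rw [Set.uIoc_of_le hsΛs.le] at hx
    have hxpos : 0 < x := lt_trans hspos hx.1
    have h := hbsub ⟨hxpos, le_trans hx.2 hΛs⟩
    rw [Real.norm_eq_abs, abs_of_nonneg (norm_nonneg _)]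
    have h6 : ‖deriv (deriv γ) x‖ ≤ (ε / (2 * (Λ - 1))) / x := by
      rw [le_div_iff₀ hxpos]
      have h' : x * ‖deriv (deriv γ) x‖ ≤ ε / (2 * (Λ - 1)) := h
      nlinarith [h']
    refine h6.trans ?_
    have hsx : s ≤ x := hx.1.le
    gcongr
  have hint := intervalIntegral.norm_integral_le_of_norm_le_const hbound
  rw [Real.dist_eq, sub_zero, ← Real.norm_eq_abs]
  have hval : (ε / (2 * (Λ - 1))) / s * |Λ * s - s| = ε / 2 := by
    rw [show Λ * s - s = (Λ - 1) * s by ring,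
      abs_of_nonneg (mul_nonneg hΛ1.le hspos.le)]
    field_simp
  calc ‖∫ σ in s..(Λ * s), ‖deriv (deriv γ) σ‖‖
      ≤ (ε / (2 * (Λ - 1))) / s * |Λ * s - s| := hint
    _ = ε / 2 := hval
    _ < ε := by linarith
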